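/- arXiv:1511.08355 — 4 statements merged into one kernel-verified Lean document; each statement's English description precedes it below -/
import Mathlib

section
/- For all ρ > 0, the function Λ(ρ) = e^{-ρ} - (1+ρ)e^{-2ρ} satisfies Λ(ρ) < e^{-2}. -/
theorem Lambda_lt_exp_neg_two
    (Λ : ℝ → ℝ) (hΛ : ∀ ρ : ℝ, Λ ρ = Real.exp (-ρ) - (1 + ρ) * Real.exp (-2 * ρ)) :
    ∀ ρ : ℝ, 0 < ρ → Λ ρ < Real.exp (-2) := by
  -- g x = exp (2x-2) - exp x + 1 + x is strictly increasing, g 0 = exp (-2) > 0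
  set g : ℝ → ℝ := fun x => Real.exp (2 * x - 2) - Real.exp x + 1 + x with hg
  have hd : ∀ x : ℝ, HasDerivAt g (2 * Real.exp (2 * x - 2) - Real.exp x + 1) x := by
    intro x
    have h1 : HasDerivAt (fun x : ℝ => 2 * x - 2) 2 x := by
      simpa using ((hasDerivAt_id x).const_mul 2).sub_const 2
    have h2 : HasDerivAt (fun x : ℝ => Real.exp (2 * x - 2)) (Real.exp (2 * x - 2) * 2) x :=
      h1.exp
    have h3 := ((h2.sub (Real.hasDerivAt_exp x)).add_const 1).add (hasDerivAt_id x)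
    exact h3.congr_deriv (by ring)
  have hderiv_pos : ∀ x : ℝ, 0 < 2 * Real.exp (2 * x - 2) - Real.exp x + 1 := by
    intro x
    have hy : Real.exp (2 * x - 2) = Real.exp (x - 1) ^ 2 := by
      rw [sq, ← Real.exp_add]; ring_nf
    have hx : Real.exp x = Real.exp 1 * Real.exp (x - 1) := by
      rw [← Real.exp_add]; ring_nf
    have hypos : 0 < Real.exp (x - 1) := Real.exp_pos _
    have he : Real.exp 1 < 2.7182818286 := Real.exp_one_lt_d9
    have he0 : 0 < Real.exp 1 := Real.exp_pos 1
    rw [hy, hx]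
    nlinarith [sq_nonneg (4 * Real.exp (x - 1) - Real.exp 1), sq_nonneg (Real.exp 1)]
  have hmono : StrictMono g := strictMono_of_hasDerivAt_pos hd hderiv_pos
  intro ρ hρ
  have hg0 : g 0 = Real.exp (-2) := by simp [hg]
  have h := hmono hρ
  rw [hg0] at h
  -- h : exp (-2) < exp (2ρ-2) - exp ρ + 1 + ρ
  have key : Real.exp ρ - 1 - ρ < Real.exp (2 * ρ - 2) := by
    simp only [hg] at h
    have := Real.exp_pos (-2)
    linarith
  have hexp : Real.exp (2 * ρ - 2) * Real.exp (-2 * ρ) = Real.exp (-2) := by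
    rw [← Real.exp_add]; ring_nf
  have h1 : Real.exp (-ρ) = Real.exp ρ * Real.exp (-2 * ρ) := by
    rw [← Real.exp_add]; ring_nf
  rw [hΛ, h1]
  have hpos : 0 < Real.exp (-2 * ρ) := Real.exp_pos _
  nlinarith [key, hpos]
end

section
/- (Boundedness of pseudo-covariance) Suppose P_{k|k-1} = P_{k-1|k-2}·(1 - 1/(1+φ_{k-1})) + Q_{k-1} with P_{1|0} = P_{0|0} + Q_0 > 0, and suppose 0 < Q_k ≤ q̄ and 0 < φ_k ≤ φ̄ for all k. Then for every k ≥ 1, Q_{k-1} ≤ P_{k|k-1} ≤ (P_{0|0} + Q_0)·(1 - 1/(1+φ̄))^{k-1} + q̄·φ̄ + Q_{k-1}. -/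
theorem pseudo_covariance_bounds
    (P Q φ : ℕ → ℝ) (P₀ qbar phibar : ℝ)
    (hP₀ : 0 < P₀) (hqbar : 0 < qbar) (hphibar : 0 < phibar)
    (hP1 : P 1 = P₀ + Q 0)
    (hrec : ∀ k : ℕ, 2 ≤ k → P k = P (k - 1) * (1 - 1 / (1 + φ (k - 1))) + Q (k - 1))
    (hQ : ∀ k, 0 < Q k ∧ Q k ≤ qbar)
    (hφ : ∀ k, 0 < φ k ∧ φ k ≤ phibar) :
    ∀ k : ℕ, 1 ≤ k →
      Q (k - 1) ≤ P k ∧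
      P k ≤ (P₀ + Q 0) * (1 - 1 / (1 + phibar)) ^ (k - 1) + qbar * phibar + Q (k - 1) := by
  have hpb1 : (0:ℝ) < 1 + phibar := by linarith
  set r : ℝ := 1 - 1 / (1 + phibar) with hrdef
  clear_value r
  have hr0 : 0 < r := by
    have h : 1 / (1 + phibar) < 1 := by rw [div_lt_one hpb1]; linarith
    rw [hrdef]; linarith
  have hr1 : r < 1 := by
    have h : 0 < 1 / (1 + phibar) := by positivity
    rw [hrdef]; linarith
  have hrk : ∀ k, 0 < 1 - 1 / (1 + φ k) ∧ 1 - 1 / (1 + φ k) ≤ r := by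
    intro k
    obtain ⟨h1, h2⟩ := hφ k
    have hpos : (0:ℝ) < 1 + φ k := by linarith
    constructor
    · have h : 1 / (1 + φ k) < 1 := by rw [div_lt_one hpos]; linarith
      linarith
    · have h : 1 / (1 + phibar) ≤ 1 / (1 + φ k) :=
        one_div_le_one_div_of_le hpos (by linarith)
      rw [hrdef]; linarith
  have hkey : qbar * phibar * r + qbar * r = qbar * phibar := by
    rw [hrdef]; field_simp; ring
  have hQ0 : 0 < Q 0 := (hQ 0).1
  have hP0Q : 0 < P₀ + Q 0 := by linarith
  intro k hk
  induction k, hk using Nat.le_induction with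
  | base =>
    simp only [Nat.sub_self, pow_zero, mul_one, hP1]
    constructor
    · linarith
    · nlinarith
  | succ n hn ih =>
    obtain ⟨ih1, ih2⟩ := ih
    have hPn : 0 < P n := lt_of_lt_of_le (hQ (n - 1)).1 ih1
    have hrec' := hrec (n + 1) (by omega)
    simp only [Nat.add_sub_cancel] at hrec' ⊢
    obtain ⟨hk1, hk2⟩ := hrk n
    constructor
    · nlinarith [(hQ n).1]
    · have hpow : 0 < r ^ (n - 1) := pow_pos hr0 _
      have hmul : P n * (1 - 1 / (1 + φ n)) ≤
          ((P₀ + Q 0) * r ^ (n - 1) + qbar * phibar + Q (n - 1)) * r :=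
        mul_le_mul ih2 hk2 (le_of_lt hk1)
          (by nlinarith [hpow, (hQ (n - 1)).1])
      have hpown : r ^ (n - 1) * r = r ^ n := by
        rw [← pow_succ]
        congr 1
        omega
      have hBr : ((P₀ + Q 0) * r ^ (n - 1) + qbar * phibar + Q (n - 1)) * r =
          (P₀ + Q 0) * r ^ n + qbar * phibar * r + Q (n - 1) * r := by
        rw [← hpown]; ring
      have hQle : Q (n - 1) ≤ qbar := (hQ (n - 1)).2
      have hQr : Q (n - 1) * r ≤ qbar * r :=
        mul_le_mul_of_nonneg_right hQle (le_of_lt hr0)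
      linarith
end

section
/- (Contraction of Lyapunov function under EKF update) Let P_{k+1|k} = P_{k|k-1}·(1 - K_k·C_k) + Q_k with Q_k ≥ 0, where K_k·C_k = 1/(1+φ_k) for φ_k > 0. Then for any real e, ((1 - K_k·C_k)²/P_{k+1|k})·e² ≤ (1 - 1/(1+φ_k))·e²/P_{k|k-1}, assuming P_{k|k-1} > 0. -/
theorem lyapunov_contraction
    (P Q φ e KC P' : ℝ)
    (hP : 0 < P) (hQ : 0 ≤ Q) (hφ : 0 < φ)
    (hKC : KC = 1 / (1 + φ))
    (hP' : P' = P * (1 - KC) + Q) :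
    ((1 - KC) ^ 2 / P') * e ^ 2 ≤ (1 - 1 / (1 + φ)) * (e ^ 2 / P) := by
  have h1φ : 0 < 1 + φ := by linarith
  have ht : (0:ℝ) < 1 - KC := by
    rw [hKC]
    have : 1 / (1 + φ) < 1 := by
      rw [div_lt_one h1φ]; linarith
    linarith
  have hPt : 0 < P * (1 - KC) := mul_pos hP ht
  have hP'pos : 0 < P' := by rw [hP']; linarith
  have key : (1 - KC) ^ 2 / P' ≤ (1 - KC) / P := by
    have h1 : (1 - KC) ^ 2 / P' ≤ (1 - KC) ^ 2 / (P * (1 - KC)) := by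
      apply div_le_div_of_nonneg_left (by positivity) hPt
      rw [hP']; linarith
    have h2 : (1 - KC) ^ 2 / (P * (1 - KC)) = (1 - KC) / P := by
      field_simp
    linarith [h1, h2.le]
  calc ((1 - KC) ^ 2 / P') * e ^ 2 ≤ ((1 - KC) / P) * e ^ 2 := by
        apply mul_le_mul_of_nonneg_right key (by positivity)
    _ = (1 - 1 / (1 + φ)) * (e ^ 2 / P) := by rw [hKC]; ring
end

section
/- (Case 2 of region analysis) Let ς ∈ (0,1) and φ = 1/(4(1+ς)). If a' ∈ (1, 2) and a = 2 - a', then the inequality |a' - 1|·(4a·φ + |a'-1|) ≤ 4ς·a²·φ holds if and only if a' ≤ (1+3ς)/(1+2ς). -/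
theorem region_case2
    (ς φ a' a : ℝ) (hς0 : 0 < ς) (hς1 : ς < 1)
    (hφ : φ = 1 / (4 * (1 + ς)))
    (ha'1 : 1 < a') (ha'2 : a' < 2) (ha : a = 2 - a') :
    |a' - 1| * (4 * a * φ + |a' - 1|) ≤ 4 * ς * a ^ 2 * φ ↔
      a' ≤ (1 + 3 * ς) / (1 + 2 * ς) := by
  have h1 : (0:ℝ) < a' - 1 := by linarith
  have hpos : (0:ℝ) < 4 * (1 + ς) := by linarith
  have hpos2 : (0:ℝ) < 1 + 2 * ς := by linarith
  have hinv : (4 * (1 + ς)) * φ = 1 := by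
    rw [hφ]; field_simp
  rw [abs_of_pos h1, le_div_iff₀ hpos2]
  subst ha
  constructor <;> intro h
  · have h2 := mul_le_mul_of_nonneg_left h hpos.le
    have e1 : 4*(1+ς)*((a'-1)*(4*(2-a')*φ + (a'-1))) =
        (a'-1)*(4*(2-a')) + 4*(1+ς)*(a'-1)^2 := by
      linear_combination (a'-1)*(4*(2-a'))*hinv
    have e2 : 4*(1+ς)*(4*ς*(2-a')^2*φ) = 4*ς*(2-a')^2 := by
      linear_combination 4*ς*(2-a')^2*hinv
    rw [e1, e2] at h2
    nlinarith [h2]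
  · have h' : (a' - 1) * (4 * (2 - a') + 4 * (1 + ς) * (a' - 1)) ≤
        4 * ς * (2 - a') ^ 2 := by nlinarith
    have := mul_le_mul_of_nonneg_right h' (by rw [hφ]; positivity : (0:ℝ) ≤ φ)
    nlinarith
end
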